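/- arXiv:2410.06820 — 2 statements merged into one kernel-verified Lean document; each statement's English description precedes it below -/
import Mathlib

section
/- Let K ≥ 1 be a natural number, let D be the (K+1)×(K+1) real diagonal matrix with diagonal entries D_{kk} = k⁴ for k = 0, 1, …, K, let v ∈ ℝ^{K+1}, let λ ≥ 0, and set A = D + λ v vᵀ. Then A is symmetric positive semidefinite, its largest eigenvalue satisfies λ_max(A) ≥ K⁴, and its smallest eigenvalue satisfies λ_min(A) ≤ 1. Consequently, if A is positive definite, its condition number obeys κ(A) = λ_max(A)/λ_min(A) ≥ K⁴. -/
open Matrix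

/-- The matrix `A = D + λ v vᵀ` governing gradient descent on the physics-informed
loss for the 1d zero-boundary Poisson equation with the Fourier-feature ansatz:
`D = diag(0⁴, 1⁴, …, K⁴)` and `λ v vᵀ` is the rank-one boundary contribution. -/
noncomputable def poissonSystemMatrix (K : ℕ) (v : Fin (K + 1) → ℝ) (lam : ℝ) :
    Matrix (Fin (K + 1)) (Fin (K + 1)) ℝ :=
  Matrix.diagonal (fun k : Fin (K + 1) => ((k : ℕ) : ℝ) ^ 4) + lam • Matrix.vecMulVec v v

section aux

variable {n : Type*} [Fintype n] [DecidableEq n]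

lemma herm_shift {A : Matrix n n ℝ} (hA : A.IsHermitian) (c : ℝ) :
    (A - c • (1 : Matrix n n ℝ)).IsHermitian := by
  unfold Matrix.IsHermitian at *
  rw [conjTranspose_sub, hA]
  congr 1
  ext i j
  simp [Matrix.one_apply, mul_comm, eq_comm]

lemma rayleigh_lower {A : Matrix n n ℝ} (hA : A.IsHermitian) {c : ℝ}
    (hc : ∀ μ : ℝ, (∃ w : n → ℝ, w ≠ 0 ∧ A *ᵥ w = μ • w) → c ≤ μ) (x : n → ℝ) :
    c * (x ⬝ᵥ x) ≤ x ⬝ᵥ A *ᵥ x := by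
  have hB : (A - c • (1 : Matrix n n ℝ)).IsHermitian := herm_shift hA c
  have hps : (A - c • (1 : Matrix n n ℝ)).PosSemidef := by
    refine hB.posSemidef_iff_eigenvalues_nonneg.mpr fun i => show (0:ℝ) ≤ hB.eigenvalues i from ?_
    set μ := hB.eigenvalues i with hμ
    have hw0 : (⇑(hB.eigenvectorBasis i) : n → ℝ) ≠ 0 :=
      fun h => hB.eigenvectorBasis.orthonormal.ne_zero i (by rw [← WithLp.toLp_ofLp (x := hB.eigenvectorBasis i), h]; simp)
    have hw := hB.mulVec_eigenvectorBasis i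
    have hAw : A *ᵥ ⇑(hB.eigenvectorBasis i) = (μ + c) • ⇑(hB.eigenvectorBasis i) := by
      have : A *ᵥ ⇑(hB.eigenvectorBasis i) =
          (A - c • (1 : Matrix n n ℝ)) *ᵥ ⇑(hB.eigenvectorBasis i)
          + c • ⇑(hB.eigenvectorBasis i) := by
        rw [sub_mulVec]
        simp [smul_mulVec, one_mulVec]
      rw [this, hw, add_smul]
    have := hc (μ + c) ⟨_, hw0, hAw⟩
    linarith
  have h := hps.dotProduct_mulVec_nonneg x
  simp only [star_trivial] at h
  have hx : x ⬝ᵥ (A - c • (1 : Matrix n n ℝ)) *ᵥ x = x ⬝ᵥ A *ᵥ x - c * (x ⬝ᵥ x) := by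
    rw [sub_mulVec, dotProduct_sub, smul_mulVec, one_mulVec, dotProduct_smul]
    ring_nf
  rw [hx] at h
  linarith

lemma rayleigh_upper {A : Matrix n n ℝ} (hA : A.IsHermitian) {c : ℝ}
    (hc : ∀ μ : ℝ, (∃ w : n → ℝ, w ≠ 0 ∧ A *ᵥ w = μ • w) → μ ≤ c) (x : n → ℝ) :
    x ⬝ᵥ A *ᵥ x ≤ c * (x ⬝ᵥ x) := by
  have hA' : (-A).IsHermitian := hA.neg
  have h := rayleigh_lower hA' (c := -c) (fun μ hμ => by
    obtain ⟨w, hw0, hw⟩ := hμ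
    have : A *ᵥ w = (-μ) • w := by
      have := congrArg Neg.neg hw
      simpa [neg_mulVec] using this
    have := hc (-μ) ⟨w, hw0, this⟩
    linarith) x
  have : x ⬝ᵥ (-A) *ᵥ x = -(x ⬝ᵥ A *ᵥ x) := by rw [neg_mulVec, dotProduct_neg]
  rw [this] at h
  linarith

end aux

lemma poisson_herm (K : ℕ) (v : Fin (K + 1) → ℝ) (lam : ℝ) :
    (poissonSystemMatrix K v lam).IsHermitian := by
  unfold Matrix.IsHermitian poissonSystemMatrix
  ext i j
  rcases eq_or_ne i j with h | h
  · simp [h]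
  · simp [Matrix.diagonal_apply, vecMulVec_apply, h, Ne.symm h, mul_comm]

lemma poisson_quad (K : ℕ) (v : Fin (K + 1) → ℝ) (lam : ℝ) (x : Fin (K + 1) → ℝ) :
    x ⬝ᵥ (poissonSystemMatrix K v lam) *ᵥ x =
      (∑ k : Fin (K + 1), ((k : ℕ) : ℝ) ^ 4 * x k ^ 2) + lam * (v ⬝ᵥ x) ^ 2 := by
  unfold poissonSystemMatrix
  rw [add_mulVec, dotProduct_add, smul_mulVec, dotProduct_smul, smul_eq_mul]
  congr 1
  · simp only [dotProduct, mulVec_diagonal]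
    apply Finset.sum_congr rfl
    intro k _
    ring
  · congr 1
    have hvm : (vecMulVec v v) *ᵥ x = fun i => v i * (v ⬝ᵥ x) := by
      ext i
      simp [mulVec, vecMulVec_apply, dotProduct, Finset.mul_sum, mul_assoc]
    rw [hvm]
    simp only [dotProduct]
    calc ∑ i, x i * (v i * ∑ j, v j * x j)
        = (∑ i, v i * x i) * (∑ j, v j * x j) := by
          rw [Finset.sum_mul]
          apply Finset.sum_congr rfl
          intro i _
          ring
      _ = (∑ j, v j * x j) ^ 2 := by ring


/-- For `K ≥ 1`, `λ ≥ 0`, the matrix `A = diag(k⁴) + λ v vᵀ` is symmetric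
positive semidefinite, its largest eigenvalue satisfies `λ_max(A) ≥ K⁴`, its smallest
eigenvalue satisfies `λ_min(A) ≤ 1`, and if `A` is positive definite then
`κ(A) = λ_max(A)/λ_min(A) ≥ K⁴`. -/
theorem poisson_condition_number (K : ℕ) (hK : 1 ≤ K)
    (v : Fin (K + 1) → ℝ) (lam : ℝ) (hlam : 0 ≤ lam)
    (lmin lmax : ℝ)
    (hmax : IsGreatest {μ : ℝ | ∃ w : Fin (K + 1) → ℝ, w ≠ 0 ∧
      (poissonSystemMatrix K v lam).mulVec w = μ • w} lmax)
    (hmin : IsLeast {μ : ℝ | ∃ w : Fin (K + 1) → ℝ, w ≠ 0 ∧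
      (poissonSystemMatrix K v lam).mulVec w = μ • w} lmin) :
    (poissonSystemMatrix K v lam).PosSemidef ∧
    ((K : ℝ) ^ 4 ≤ lmax) ∧
    (lmin ≤ 1) ∧
    ((poissonSystemMatrix K v lam).PosDef → (K : ℝ) ^ 4 ≤ lmax / lmin) := by
  have hA := poisson_herm K v lam
  set A := poissonSystemMatrix K v lam with hAdef
  -- Positive semidefinite
  have hps : A.PosSemidef := by
    refine PosSemidef.of_dotProduct_mulVec_nonneg hA fun x => ?_
    simp only [star_trivial]
    rw [poisson_quad]
    have h1 : (0:ℝ) ≤ ∑ k : Fin (K+1), ((k : ℕ) : ℝ) ^ 4 * x k ^ 2 :=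
      Finset.sum_nonneg fun k _ => by positivity
    have h2 : (0:ℝ) ≤ lam * (v ⬝ᵥ x) ^ 2 := by positivity
    linarith
  -- lmax ≥ K^4 : test vector e_K
  have hupper := rayleigh_upper hA (fun μ hμ => hmax.2 hμ)
  have hlower := rayleigh_lower hA (fun μ hμ => hmin.2 hμ)
  have hKlt : K < K + 1 := Nat.lt_succ_self K
  have hmax4 : (K : ℝ) ^ 4 ≤ lmax := by
    set x : Fin (K + 1) → ℝ := Pi.single ⟨K, hKlt⟩ 1 with hxdef
    have hxx : x ⬝ᵥ x = 1 := by
      simp [hxdef, dotProduct, Pi.single_apply]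
    have hq : x ⬝ᵥ A *ᵥ x = (K : ℝ) ^ 4 + lam * (v ⟨K, hKlt⟩) ^ 2 := by
      rw [poisson_quad]
      congr 1
      · rw [Finset.sum_eq_single (⟨K, hKlt⟩ : Fin (K + 1))]
        · simp [hxdef]
        · intro b _ hb; simp [hxdef, Pi.single_apply, hb]
        · intro h; exact absurd (Finset.mem_univ _) h
      · congr 1
        simp [hxdef, dotProduct, Pi.single_apply]
    have := hupper x
    rw [hq, hxx, mul_one] at this
    nlinarith [sq_nonneg (v ⟨K, hKlt⟩)]
  -- lmin ≤ 1
  have h01 : (0 : Fin (K+1)) ≠ (1 : Fin (K+1)) := by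
    have : ((0 : Fin (K+1)) : ℕ) ≠ ((1 : Fin (K+1)) : ℕ) := by
      simp [Fin.val_one, Nat.mod_eq_of_lt (by omega : 1 < K + 1)]
    exact fun h => this (congrArg Fin.val h)
  have hmin1 : lmin ≤ 1 := by
    by_cases hv0 : v 0 = 0
    · -- test vector e_0
      set x : Fin (K + 1) → ℝ := Pi.single 0 1 with hxdef
      have hxx : x ⬝ᵥ x = 1 := by simp [hxdef, dotProduct, Pi.single_apply]
      have hq : x ⬝ᵥ A *ᵥ x = 0 := by
        rw [poisson_quad]
        have : v ⬝ᵥ x = 0 := by simp [hxdef, dotProduct, Pi.single_apply, hv0]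
        rw [this]
        simp
        rw [Finset.sum_eq_single (0 : Fin (K+1))] <;>
          simp [hxdef, Pi.single_apply]
      have := hlower x
      rw [hq, hxx, mul_one] at this
      linarith
    · -- test vector: x 0 = -v 1 / v 0, x 1 = 1
      set x : Fin (K + 1) → ℝ :=
        fun i => if i = 0 then -v 1 / v 0 else if i = 1 then 1 else 0 with hxdef
      have hvx : v ⬝ᵥ x = 0 := by
        rw [dotProduct, Finset.sum_eq_add_of_mem (0 : Fin (K+1)) 1
          (Finset.mem_univ _) (Finset.mem_univ _) h01]
        · have hKne : K ≠ 0 := by omega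
          simp [hxdef, h01, hv0, hKne]
          field_simp
          ring
        · intro c _ hc
          simp [hxdef, hc.1, hc.2]
      have hq : x ⬝ᵥ A *ᵥ x = 1 := by
        rw [poisson_quad, hvx]
        rw [Finset.sum_eq_add_of_mem (0 : Fin (K+1)) 1
          (Finset.mem_univ _) (Finset.mem_univ _) h01]
        · have h1v : (((1 : Fin (K+1)) : ℕ) : ℝ) = 1 := by
            simp [Fin.val_one, Nat.mod_eq_of_lt (by omega : 1 < K + 1)]
          have hKne : K ≠ 0 := by omega
          simp [hxdef, h01, Ne.symm h01, h1v, hKne]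
          omega
        · intro c _ hc
          simp [hxdef, hc.1, hc.2]
      have hxx1 : (1:ℝ) ≤ x ⬝ᵥ x := by
        rw [dotProduct, Finset.sum_eq_add_of_mem (0 : Fin (K+1)) 1
          (Finset.mem_univ _) (Finset.mem_univ _) h01]
        · have hKne : K ≠ 0 := by omega
          simp [hxdef, h01, Ne.symm h01, hKne]
          nlinarith [mul_self_nonneg (-v 1 / v 0)]
        · intro c _ hc
          simp [hxdef, hc.1, hc.2]
      have := hlower x
      rw [hq] at this
      rcases le_or_gt lmin 0 with h | h
      · linarith
      · nlinarith
  refine ⟨hps, hmax4, hmin1, fun hpd => ?_⟩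
  -- lmin > 0
  obtain ⟨w, hw0, hw⟩ := hmin.1
  have hpos : 0 < lmin := by
    have h1 := hpd.dotProduct_mulVec_pos hw0
    simp only [star_trivial] at h1
    rw [hw, dotProduct_smul] at h1
    have hww : 0 < w ⬝ᵥ w := by
      have h0 : 0 ≤ w ⬝ᵥ w := by
        rw [dotProduct]
        exact Finset.sum_nonneg fun i _ => mul_self_nonneg _
      rcases h0.lt_or_eq with h | h
      · exact h
      · exact absurd (dotProduct_self_eq_zero.mp h.symm) hw0
    rw [smul_eq_mul] at h1
    nlinarith
  have hKpos : (0:ℝ) < (K:ℝ)^4 := by positivity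
  have hlmaxpos : 0 < lmax := lt_of_lt_of_le hKpos hmax4
  rw [le_div_iff₀ hpos]
  nlinarith
end

section
/- (Convergence rate in the linear case.) Let A and P be real n×n matrices with n ≥ 1, let η ∈ ℝ be nonzero, and let L ≥ 1. Suppose there are m training instances: for each k = 1, …, m, vectors b_k ∈ ℝⁿ and Θ*_k ∈ ℝⁿ with AΘ*_k = b_k, and a sequence Θ_0^{(k)}, …, Θ_L^{(k)} satisfying the preconditioned iteration Θ_{l+1}^{(k)} = Θ_l^{(k)} − ηP(AΘ_l^{(k)} − b_k) and achieving exact fit Θ_L^{(k)} = Θ*_k. Let X be the n×m matrix whose k-th column is Θ_0^{(k)} − Θ*_k, and assume X·Xᵀ is invertible. Then (I − ηPA)^L = 0, and consequently every complex eigenvalue of the matrix PA equals 1/η; in particular the ratio of the largest to the smallest modulus of the eigenvalues of PA equals 1. -/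
open Matrix

/-- Convergence rate in the linear case: if for `m` training instances
the preconditioned iteration `Θ_{l+1}^{(k)} = Θ_l^{(k)} − ηP(AΘ_l^{(k)} − b_k)` with
`AΘ*_k = b_k` achieves exact fit `Θ_L^{(k)} = Θ*_k`, and the matrix `X` of initial
errors `Θ_0^{(k)} − Θ*_k` has `X·Xᵀ` invertible, then `(I − ηPA)^L = 0`; consequently
every complex eigenvalue of `PA` equals `1/η`, and in particular the ratio of the
largest to the smallest modulus of the eigenvalues of `PA` equals `1`. -/
theorem learned_solver_optimal_conditioning {n m : ℕ} (hn : 1 ≤ n)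
    (A P : Matrix (Fin n) (Fin n) ℝ) (η : ℝ) (hη : η ≠ 0) (L : ℕ) (hL : 1 ≤ L)
    (b Θstar : Fin m → Fin n → ℝ)
    (hsol : ∀ k : Fin m, A.mulVec (Θstar k) = b k)
    (Θ : Fin m → ℕ → Fin n → ℝ)
    (hiter : ∀ (k : Fin m) (l : ℕ), l < L →
      Θ k (l + 1) = Θ k l - η • P.mulVec (A.mulVec (Θ k l) - b k))
    (hfit : ∀ k : Fin m, Θ k L = Θstar k)
    (X : Matrix (Fin n) (Fin m) ℝ)
    (hX : X = Matrix.of fun (i : Fin n) (k : Fin m) => (Θ k 0 - Θstar k) i)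
    (hXunit : IsUnit (X * Xᵀ)) :
    ((1 : Matrix (Fin n) (Fin n) ℝ) - η • (P * A)) ^ L = 0 ∧
    (∀ μ : ℂ, μ ∈ spectrum ℂ ((P * A).map (Complex.ofReal ·)) → μ = 1 / (η : ℂ)) ∧
    (∀ μ₁ μ₂ : ℂ, μ₁ ∈ spectrum ℂ ((P * A).map (Complex.ofReal ·)) →
      μ₂ ∈ spectrum ℂ ((P * A).map (Complex.ofReal ·)) →
      ‖μ₁‖ / ‖μ₂‖ = 1) := by
  set M : Matrix (Fin n) (Fin n) ℝ := (1 : Matrix (Fin n) (Fin n) ℝ) - η • (P * A) with hM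
  -- error recursion
  have herr : ∀ (k : Fin m) (l : ℕ), l ≤ L →
      Θ k l - Θstar k = (M ^ l).mulVec (Θ k 0 - Θstar k) := by
    intro k l hl
    induction l with
    | zero => simp
    | succ l ih =>
      have hlL : l < L := Nat.lt_of_succ_le hl
      have hrec := hiter k l hlL
      have hstep : Θ k (l + 1) - Θstar k = M.mulVec (Θ k l - Θstar k) := by
        have hMv : M.mulVec (Θ k l - Θstar k)
            = (Θ k l - Θstar k) - η • P.mulVec (A.mulVec (Θ k l) - A.mulVec (Θstar k)) := by
          rw [hM, Matrix.sub_mulVec, Matrix.one_mulVec, Matrix.smul_mulVec,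
            ← Matrix.mulVec_mulVec, Matrix.mulVec_sub]
        rw [hrec, ← hsol k, hMv]
        abel
      rw [hstep, ih (Nat.le_of_succ_le hl), Matrix.mulVec_mulVec, ← pow_succ']
  have hMLX : M ^ L * X = 0 := by
    ext i k
    have hcol : (fun j => X j k) = Θ k 0 - Θstar k := by
      funext j; simp [hX]
    have h0 : (M ^ L).mulVec (Θ k 0 - Θstar k) = 0 := by
      rw [← herr k L le_rfl, hfit k, sub_self]
    calc (M ^ L * X) i k = (M ^ L).mulVec (fun j => X j k) i := by
          simp [Matrix.mul_apply, Matrix.mulVec, dotProduct]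
      _ = 0 := by rw [hcol, h0]; rfl
  have hML : M ^ L = 0 := by
    obtain ⟨u, hu⟩ := hXunit
    have hinv : X * (Xᵀ * (↑u⁻¹ : Matrix (Fin n) (Fin n) ℝ)) = 1 := by
      rw [← Matrix.mul_assoc, ← hu]; exact u.mul_inv
    calc M ^ L = M ^ L * (X * (Xᵀ * (↑u⁻¹ : Matrix (Fin n) (Fin n) ℝ))) := by
          rw [hinv, mul_one]
      _ = (M ^ L * X) * (Xᵀ * (↑u⁻¹ : Matrix (Fin n) (Fin n) ℝ)) := by
          rw [Matrix.mul_assoc]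
      _ = 0 := by rw [hMLX]; exact Matrix.zero_mul _
  have heig : ∀ μ : ℂ, μ ∈ spectrum ℂ ((P * A).map (Complex.ofReal ·)) → μ = 1 / (η : ℂ) := by
    intro μ hμ
    set N : Matrix (Fin n) (Fin n) ℂ := (P * A).map (Complex.ofReal ·) with hN
    have hNL : ((1 : Matrix (Fin n) (Fin n) ℂ) - (η : ℂ) • N) ^ L = 0 := by
      have hmap : ((M : Matrix (Fin n) (Fin n) ℝ).map (Complex.ofReal ·)) =
          (1 : Matrix (Fin n) (Fin n) ℂ) - (η : ℂ) • N := by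
        ext i j
        by_cases hij : i = j <;>
          simp [hM, hN, Matrix.map_apply, Matrix.one_apply, hij, Matrix.sub_apply,
            Matrix.smul_apply]
      have hmp : ∀ (B : Matrix (Fin n) (Fin n) ℝ) (l : ℕ),
          (B.map (Complex.ofReal ·)) ^ l = (B ^ l).map (Complex.ofReal ·) := by
        intro B l
        exact
          (map_pow (Complex.ofRealHom).mapMatrix B l).symm
      calc ((1 : Matrix (Fin n) (Fin n) ℂ) - (η : ℂ) • N) ^ L
          = ((M).map (Complex.ofReal ·)) ^ L := by rw [hmap]
        _ = (M ^ L).map (Complex.ofReal ·) := hmp M L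
        _ = 0 := by rw [hML]; ext i j; simp
    have hη' : (-(η : ℂ)) ≠ 0 := by
      simpa using (Complex.ofReal_ne_zero.mpr hη)
    have hmem : (1 - (η : ℂ) * μ) ∈
        spectrum ℂ ((1 : Matrix (Fin n) (Fin n) ℂ) - (η : ℂ) • N) := by
      rw [spectrum.mem_iff] at hμ ⊢
      intro hcontra
      apply hμ
      have heq : algebraMap ℂ (Matrix (Fin n) (Fin n) ℂ) (1 - (η : ℂ) * μ)
          - ((1 : Matrix (Fin n) (Fin n) ℂ) - (η : ℂ) • N)
          = (Units.mk0 (-(η : ℂ)) hη') • (algebraMap ℂ (Matrix (Fin n) (Fin n) ℂ) μ - N) := by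
        simp only [Units.smul_mk0, Algebra.algebraMap_eq_smul_one]
        module
      rw [heq] at hcontra
      exact (isUnit_smul_iff (Units.mk0 (-(η : ℂ)) hη') _).mp hcontra
    have hpow : (1 - (η : ℂ) * μ) ^ L ∈
        spectrum ℂ (((1 : Matrix (Fin n) (Fin n) ℂ) - (η : ℂ) • N) ^ L) :=
      spectrum.pow_image_subset _ L ⟨_, hmem, rfl⟩
    rw [hNL] at hpow
    haveI : NeZero n := ⟨Nat.one_le_iff_ne_zero.mp hn⟩
    rw [spectrum.zero_eq] at hpow
    have h0 : (1 - (η : ℂ) * μ) ^ L = 0 := hpow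
    have h1 : (1 : ℂ) - (η : ℂ) * μ = 0 :=
      pow_eq_zero_iff (Nat.one_le_iff_ne_zero.mp hL) |>.mp h0
    have hηℂ : (η : ℂ) ≠ 0 := Complex.ofReal_ne_zero.mpr hη
    field_simp
    linear_combination -h1
  refine ⟨hML, heig, ?_⟩
  intro μ₁ μ₂ h₁ h₂
  rw [heig μ₁ h₁, heig μ₂ h₂]
  have hne : ‖(1 / (η : ℂ))‖ ≠ 0 :=
    norm_ne_zero_iff.mpr (one_div_ne_zero (Complex.ofReal_ne_zero.mpr hη))
  exact div_self hne
end
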